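/- Let G be the geometric graph of ℝ² with vertices u₁ = (2,2), u₂ = (0,0), u₃ = (2,0), u₄ = (0,2), u₅ = (1,1) and edges (u₁,u₄), (u₁,u₅), (u₂,u₃), (u₂,u₅), and let H be the geometric graph of ℝ² with vertices v₁ = (0,0), v₂ = (2,2), v₃ = (0,2), v₄ = (2,0), v₅ = (1,1) and edges (v₁,v₃), (v₁,v₅), (v₂,v₄), (v₂,v₅). Then for all cost coefficients C_V > 0, C_E > 0, GGD(G,H) > 0. (Since GMD(G,H) = 0 for these two graphs, the GGD is not stable with respect to the GMD.) -/

import Mathlib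

open scoped BigOperators

noncomputable section

/-- An inexact matching between a geometric graph with vertices indexed by
`Fin m` and one with vertices indexed by `Fin n`, encoded as a function
`π : Fin m → Option (Fin n)`: `π i = none` means the vertex `u_i` is deleted
(matched to the dummy vertex `ε_V`), and the matching restricts to a bijection
between the non-deleted vertices, i.e. `π` is injective on the indices mapped
to `some` values; a vertex `v_j` of `H` not in the image is deleted
(`π⁻¹(v_j) = ε_V`). -/
def IsMatching {m n : ℕ} (π : Fin m → Option (Fin n)) : Prop :=
  ∀ ⦃i i' : Fin m⦄ ⦃j : Fin n⦄, π i = some j → π i' = some j → i = i'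

/-- The cost of an inexact matching `π` between the geometric graph `G` with
vertex positions `u : Fin m → X` and edge set `EG` and the geometric graph `H`
with vertex positions `v : Fin n → X` and edge set `EH`:
the sum of the vertex-translation costs `C_V·|u − π(u)|` over non-deleted
vertices, the edge-translation costs `C_E·||e| − |π(e)||` over edges of `G`
whose endpoints are matched to the endpoints of an edge of `H`, and the
edge-deletion costs `C_E·|e|`, resp. `C_E·|f|`, over the remaining edges of
`G`, resp. of `H`. -/
def matchCost {X : Type*} [MetricSpace X] {m n : ℕ}
    (u : Fin m → X) (EG : Finset (Fin m × Fin m))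
    (v : Fin n → X) (EH : Finset (Fin n × Fin n))
    (CV CE : ℝ) (π : Fin m → Option (Fin n)) : ℝ :=
  (∑ i : Fin m, Option.elim (π i) 0 fun j => CV * dist (u i) (v j)) +
  (∑ e ∈ EG,
    match π e.1, π e.2 with
    | some j₁, some j₂ =>
        if (j₁, j₂) ∈ EH then CE * |dist (u e.1) (u e.2) - dist (v j₁) (v j₂)|
        else CE * dist (u e.1) (u e.2)
    | _, _ => CE * dist (u e.1) (u e.2)) +
  (∑ f ∈ EH,
    if ∃ i₁ i₂ : Fin m, π i₁ = some f.1 ∧ π i₂ = some f.2 ∧ (i₁, i₂) ∈ EG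
    then 0 else CE * dist (v f.1) (v f.2))

/-- The geometric graph distance: the least cost of an inexact matching
between the two geometric graphs. -/
def GGD {X : Type*} [MetricSpace X] {m n : ℕ}
    (u : Fin m → X) (EG : Finset (Fin m × Fin m))
    (v : Fin n → X) (EH : Finset (Fin n × Fin n))
    (CV CE : ℝ) : ℝ :=
  sInf { c : ℝ | ∃ π : Fin m → Option (Fin n),
    IsMatching π ∧ c = matchCost u EG v EH CV CE π }

/-- A point of the Euclidean plane `ℝ²`. -/
def pt (a b : ℝ) : EuclideanSpace ℝ (Fin 2) := WithLp.toLp 2 ![a, b]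

/-- The vertex sequence `u₁ = (2,2), u₂ = (0,0), u₃ = (2,0), u₄ = (0,2),
u₅ = (1,1)` of `G`. -/
def uG : Fin 5 → EuclideanSpace ℝ (Fin 2) := ![pt 2 2, pt 0 0, pt 2 0, pt 0 2, pt 1 1]

/-- The edge set `(u₁,u₄), (u₁,u₅), (u₂,u₃), (u₂,u₅)` of `G`. -/
def edgesG : Finset (Fin 5 × Fin 5) := {(0, 3), (0, 4), (1, 2), (1, 4)}

/-- The vertex sequence `v₁ = (0,0), v₂ = (2,2), v₃ = (0,2), v₄ = (2,0),
v₅ = (1,1)` of `H`. -/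
def vH : Fin 5 → EuclideanSpace ℝ (Fin 2) := ![pt 0 0, pt 2 2, pt 0 2, pt 2 0, pt 1 1]

/-- The edge set `(v₁,v₃), (v₁,v₅), (v₂,v₄), (v₂,v₅)` of `H`. -/
def edgesH : Finset (Fin 5 × Fin 5) := {(0, 2), (0, 4), (1, 3), (1, 4)}

lemma dist_pt (a b c d : ℝ) :
    dist (pt a b) (pt c d) = Real.sqrt ((a - c) ^ 2 + (b - d) ^ 2) := by
  rw [EuclideanSpace.dist_eq]
  simp [pt, Fin.sum_univ_two, Real.dist_eq, sq_abs]

lemma one_le_sqrt' {x : ℝ} (hx : 1 ≤ x) : 1 ≤ Real.sqrt x := by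
  nlinarith [Real.sq_sqrt (by linarith : (0:ℝ) ≤ x), Real.sqrt_nonneg x]

lemma elim_nonneg (CV : ℝ) (hCV : 0 < CV) (o : Option (Fin 5)) (i : Fin 5) :
    0 ≤ Option.elim o 0 fun j => CV * dist (uG i) (vH j) := by
  cases o with
  | none => simp
  | some j =>
    simp only [Option.elim]
    positivity

lemma key_lower_bound (CV CE : ℝ) (hCV : 0 < CV) (hCE : 0 < CE)
    (π : Fin 5 → Option (Fin 5)) (hπ : IsMatching π) :
    min CV CE ≤ matchCost uG edgesG vH edgesH CV CE π := by
  have hA : (0:ℝ) ≤ ∑ i : Fin 5,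
      Option.elim (π i) 0 fun j => CV * dist (uG i) (vH j) :=
    Finset.sum_nonneg fun i _ => elim_nonneg CV hCV (π i) i
  have hCnn : ∀ f : Fin 5 × Fin 5,
      (0:ℝ) ≤ if ∃ i₁ i₂ : Fin 5, π i₁ = some f.1 ∧ π i₂ = some f.2 ∧ (i₁, i₂) ∈ edgesG
      then 0 else CE * dist (vH f.1) (vH f.2) := by
    intro f
    split
    · exact le_refl 0
    · positivity
  have hC : (0:ℝ) ≤ ∑ f ∈ edgesH,
      if ∃ i₁ i₂ : Fin 5, π i₁ = some f.1 ∧ π i₂ = some f.2 ∧ (i₁, i₂) ∈ edgesG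
      then 0 else CE * dist (vH f.1) (vH f.2) :=
    Finset.sum_nonneg fun f _ => hCnn f
  by_cases h : ∃ i₁ i₂ : Fin 5, π i₁ = some 0 ∧ π i₂ = some 2 ∧ (i₁, i₂) ∈ edgesG
  · -- vertex translation cost is at least CV
    obtain ⟨i₁, i₂, h1, h2, he⟩ := h
    have hne : i₁ ≠ i₂ := by
      intro hh; rw [hh, h2] at h1; exact absurd (Option.some.inj h1) (by decide)
    have hAle : CV * dist (uG i₁) (vH 0) + CV * dist (uG i₂) (vH 2) ≤
        ∑ i : Fin 5, Option.elim (π i) 0 fun j => CV * dist (uG i) (vH j) := by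
      have hs := Finset.sum_le_sum_of_subset_of_nonneg
        (Finset.subset_univ ({i₁, i₂} : Finset (Fin 5)))
        (f := fun i => Option.elim (π i) 0 fun j => CV * dist (uG i) (vH j))
        (fun i _ _ => elim_nonneg CV hCV (π i) i)
      rw [Finset.sum_pair hne, h1, h2] at hs
      simpa using hs
    have hd : 1 ≤ dist (uG i₁) (vH 0) + dist (uG i₂) (vH 2) := by
      have h2le : (1:ℝ) ≤ Real.sqrt 2 := one_le_sqrt' (by norm_num)
      have h8le : (1:ℝ) ≤ Real.sqrt 8 := one_le_sqrt' (by norm_num)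
      fin_cases he
      · show (1:ℝ) ≤ dist (pt 2 2) (pt 0 0) + dist (pt 0 2) (pt 0 2)
        rw [dist_pt, dist_pt]
        norm_num
        try linarith [Real.sqrt_nonneg (8:ℝ), Real.sqrt_nonneg (0:ℝ)]
      · show (1:ℝ) ≤ dist (pt 2 2) (pt 0 0) + dist (pt 1 1) (pt 0 2)
        rw [dist_pt, dist_pt]
        norm_num
        try linarith [Real.sqrt_nonneg (2:ℝ), Real.sqrt_nonneg (8:ℝ)]
      · show (1:ℝ) ≤ dist (pt 0 0) (pt 0 0) + dist (pt 2 0) (pt 0 2)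
        rw [dist_pt, dist_pt]
        norm_num
        try linarith [Real.sqrt_nonneg (8:ℝ), Real.sqrt_nonneg (0:ℝ)]
      · show (1:ℝ) ≤ dist (pt 0 0) (pt 0 0) + dist (pt 1 1) (pt 0 2)
        rw [dist_pt, dist_pt]
        norm_num
        try linarith [Real.sqrt_nonneg (2:ℝ), Real.sqrt_nonneg (0:ℝ)]
    have hv : CV ≤ CV * dist (uG i₁) (vH 0) + CV * dist (uG i₂) (vH 2) := by
      nlinarith [dist_nonneg (x := uG i₁) (y := vH 0), dist_nonneg (x := uG i₂) (y := vH 2)]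
    unfold matchCost
    refine le_trans (min_le_left _ _) ?_
    refine le_trans (hv.trans hAle) ?_
    refine le_trans ?_ (le_add_of_nonneg_right hC)
    refine le_add_of_nonneg_right ?_
    refine Finset.sum_nonneg fun e _ => ?_
    split
    · split <;> positivity
    · positivity
  · -- the H-edge (0,2) is deleted, costing CE · 2
    have hmem : ((0 : Fin 5), (2 : Fin 5)) ∈ edgesH := by decide
    have hCle : CE * dist (vH 0) (vH 2) ≤ ∑ f ∈ edgesH,
        if ∃ i₁ i₂ : Fin 5, π i₁ = some f.1 ∧ π i₂ = some f.2 ∧ (i₁, i₂) ∈ edgesG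
        then 0 else CE * dist (vH f.1) (vH f.2) := by
      have hs := Finset.single_le_sum
        (f := fun f : Fin 5 × Fin 5 =>
          if ∃ i₁ i₂ : Fin 5, π i₁ = some f.1 ∧ π i₂ = some f.2 ∧ (i₁, i₂) ∈ edgesG
          then 0 else CE * dist (vH f.1) (vH f.2))
        (fun f _ => hCnn f) hmem
      exact le_trans (le_of_eq (if_neg h).symm) hs
    have hdist : dist (vH 0) (vH 2) = 2 := by
      show dist (pt 0 0) (pt 0 2) = 2
      rw [dist_pt]
      norm_num
      try rw [show (4:ℝ) = 2 ^ 2 by norm_num, Real.sqrt_sq (by norm_num)]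
    rw [hdist] at hCle
    have hCE2 : CE ≤ CE * 2 := by linarith
    unfold matchCost
    refine le_trans (min_le_right _ _) ?_
    refine le_trans (hCE2.trans hCle) ?_
    refine le_add_of_nonneg_left ?_
    have hBnn : (0:ℝ) ≤ ∑ e ∈ edgesG,
        (match π e.1, π e.2 with
        | some j₁, some j₂ =>
            if (j₁, j₂) ∈ edgesH then CE * |dist (uG e.1) (uG e.2) - dist (vH j₁) (vH j₂)|
            else CE * dist (uG e.1) (uG e.2)
        | _, _ => CE * dist (uG e.1) (uG e.2)) := by
      refine Finset.sum_nonneg fun e _ => ?_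
      split
      · split <;> positivity
      · positivity
    refine add_nonneg hA ?_
    refine Finset.sum_nonneg fun e _ => ?_
    split
    · split <;> positivity
    · positivity

/-- For the geometric graphs `G` and `H` of `ℝ²` above (for which
`GMD(G,H) = 0`) and all cost coefficients `C_V > 0`, `C_E > 0`, one has
`GGD(G,H) > 0`; so the GGD is not stable with respect to the GMD. -/
theorem ggd_pos_of_gmd_zero_example (CV CE : ℝ) (hCV : 0 < CV) (hCE : 0 < CE) :
    0 < GGD uG edgesG vH edgesH CV CE := by
  have hne : { c : ℝ | ∃ π : Fin 5 → Option (Fin 5),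
      IsMatching π ∧ c = matchCost uG edgesG vH edgesH CV CE π }.Nonempty := by
    refine ⟨matchCost uG edgesG vH edgesH CV CE (fun _ => none),
      fun _ => none, ?_, rfl⟩
    intro i i' j hij _
    simp at hij
  have hlb : ∀ c ∈ { c : ℝ | ∃ π : Fin 5 → Option (Fin 5),
      IsMatching π ∧ c = matchCost uG edgesG vH edgesH CV CE π }, min CV CE ≤ c := by
    rintro c ⟨π, hπ, rfl⟩
    exact key_lower_bound CV CE hCV hCE π hπ
  have h1 : min CV CE ≤ GGD uG edgesG vH edgesH CV CE := le_csInf hne hlb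
  have h2 : 0 < min CV CE := lt_min hCV hCE
  linarith
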